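/- Let f : ℝ → ℝ be continuous and let φ : [0,∞) → ℝ be a bounded C² solution of φ'' + f(φ) = 0 with φ' > 0 on (0,∞) and φ(y) → 1 as y → ∞. Then (1/2)·φ'(0)² = ∫_{φ(0)}^{1} f(s) ds. -/

import Mathlib

open Set Filter

theorem stmt1 (f φ φ' : ℝ → ℝ) (hf : Continuous f)
    (hφ : ∀ y ∈ Ici (0:ℝ), HasDerivAt φ (φ' y) y)
    (hφ' : ∀ y ∈ Ici (0:ℝ), HasDerivAt φ' (-f (φ y)) y)
    (hbdd : ∃ M, ∀ y ∈ Ici (0:ℝ), |φ y| ≤ M)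
    (hmono : ∀ y ∈ Ioi (0:ℝ), 0 < φ' y)
    (hlim : Tendsto φ atTop (nhds 1)) :
    (1/2) * (φ' 0)^2 = ∫ s in (φ 0)..1, f s := by
  obtain ⟨M, hM⟩ := hbdd
  set F : ℝ → ℝ := fun u => ∫ s in (φ 0)..u, f s with hFdef
  have hF : ∀ u, HasDerivAt F (f u) u := fun u =>
    intervalIntegral.integral_hasDerivAt_right (hf.intervalIntegrable _ _)
      (hf.stronglyMeasurableAtFilter _ _) hf.continuousAt
  set E : ℝ → ℝ := fun y => (1/2) * (φ' y)^2 + F (φ y) with hEdef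
  have hE : ∀ y ∈ Ici (0:ℝ), HasDerivAt E 0 y := by
    intro y hy
    have h1 : HasDerivAt (fun y => (1/2) * (φ' y)^2)
        ((1/2) * (2 * φ' y ^ 1 * (-f (φ y)))) y := ((hφ' y hy).pow 2).const_mul _
    have h2 : HasDerivAt (fun y => F (φ y)) (f (φ y) * φ' y) y :=
      (hF (φ y)).comp y (hφ y hy)
    have := h1.add h2
    refine this.congr_deriv ?_
    ring
  have hconst : ∀ y ∈ Ici (0:ℝ), E y = E 0 := by
    intro y hy
    have hc : ContinuousOn E (Icc 0 y) := fun x hx =>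
      (hE x hx.1).continuousAt.continuousWithinAt
    have hd : ∀ x ∈ Ico (0:ℝ) y, HasDerivWithinAt E 0 (Ici x) x := fun x hx =>
      (hE x hx.1).hasDerivWithinAt
    exact constant_of_has_deriv_right_zero hc hd y ⟨hy, le_refl y⟩
  have hF0 : F (φ 0) = 0 := intervalIntegral.integral_same
  have hkey : ∀ y ∈ Ici (0:ℝ), (φ' y)^2 = (φ' 0)^2 - 2 * F (φ y) := by
    intro y hy
    have := hconst y hy
    simp only [hEdef, hF0] at this
    linarith
  have hFcont : Continuous F :=
    continuous_iff_continuousAt.mpr fun u => (hF u).continuousAt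
  set L : ℝ := (φ' 0)^2 - 2 * F 1 with hLdef
  have hsq : Tendsto (fun y => (φ' y)^2) atTop (nhds L) := by
    have h1 : Tendsto (fun y => (φ' 0)^2 - 2 * F (φ y)) atTop (nhds L) := by
      have := (hFcont.tendsto 1).comp hlim
      exact (tendsto_const_nhds.sub (this.const_mul 2))
    refine h1.congr' ?_
    filter_upwards [eventually_ge_atTop (0:ℝ)] with y hy
    exact (hkey y hy).symm
  have hL0 : 0 ≤ L := ge_of_tendsto hsq (Eventually.of_forall fun y => sq_nonneg _)
  have hd : Tendsto φ' atTop (nhds (Real.sqrt L)) := by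
    have h1 : Tendsto (fun y => Real.sqrt ((φ' y)^2)) atTop (nhds (Real.sqrt L)) :=
      (Real.continuous_sqrt.tendsto L).comp hsq
    refine h1.congr' ?_
    filter_upwards [eventually_gt_atTop (0:ℝ)] with y hy
    rw [Real.sqrt_sq (hmono y hy).le]
  -- show sqrt L = 0
  have hL : Real.sqrt L = 0 := by
    by_contra h
    set d := Real.sqrt L with hdd
    have hdpos : 0 < d := lt_of_le_of_ne (Real.sqrt_nonneg L) (Ne.symm h)
    have hev : ∀ᶠ y in atTop, d/2 ≤ φ' y :=
      hd.eventually (eventually_ge_nhds (by linarith))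
    obtain ⟨Y₀, hY₀⟩ := (eventually_atTop).mp hev
    set Y := max Y₀ 0 with hYdef
    have hY0 : (0:ℝ) ≤ Y := le_max_right _ _
    have hgrow : ∀ z, Y ≤ z → φ Y + d/2 * (z - Y) ≤ φ z := by
      intro z hz
      set g : ℝ → ℝ := fun y => φ y - d/2 * y with hgdef
      have hmon : MonotoneOn g (Icc Y z) := by
        apply monotoneOn_of_deriv_nonneg (convex_Icc Y z)
        · intro x hx
          exact ((hφ x (le_trans hY0 hx.1)).sub
            ((hasDerivAt_id x).const_mul (d/2))).continuousAt.continuousWithinAt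
        · intro x hx
          rw [interior_Icc] at hx
          exact ((hφ x (le_trans hY0 hx.1.le)).sub
            ((hasDerivAt_id x).const_mul (d/2))).differentiableAt.differentiableWithinAt
        · intro x hx
          rw [interior_Icc] at hx
          have hder : deriv g x = φ' x - d/2 := by
            have : HasDerivAt g (φ' x - d/2 * 1) x :=
              (hφ x (le_trans hY0 hx.1.le)).sub ((hasDerivAt_id x).const_mul (d/2))
            simpa using this.deriv
          rw [hder, sub_nonneg]
          exact hY₀ x (le_trans (le_max_left _ _) hx.1.le)
      have := hmon (left_mem_Icc.mpr hz) ⟨hz, le_refl z⟩ hz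
      simp only [hgdef] at this
      nlinarith
    set z := Y + 2 * (M - φ Y + 1) / d with hzdef
    have hMY : φ Y ≤ M := le_trans (le_abs_self _) (hM Y hY0)
    have hnum : 0 < M - φ Y + 1 := by linarith
    have hzY : Y ≤ z := by
      have h0 : 0 ≤ 2 * (M - φ Y + 1) / d := by positivity
      rw [hzdef]
      linarith
    have h1 := hgrow z hzY
    have h2 : φ z ≤ M := le_trans (le_abs_self _) (hM z (le_trans hY0 hzY))
    have : d/2 * (z - Y) = M - φ Y + 1 := by
      rw [hzdef]
      field_simp
      ring
    linarith
  have hLeq : L = 0 := le_antisymm (Real.sqrt_eq_zero'.mp hL) hL0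
  have h2 : (φ' 0)^2 - 2 * F 1 = 0 := hLdef ▸ hLeq
  show (1/2) * (φ' 0)^2 = F 1
  linarith
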